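/- Let N be a finite nonempty index set, λ ∈ (0,1), and let (Q_j)_{j∈N} be jointly independent random variables with values in [0,1] such that Pr(Q_j ≤ x) ≤ x for all x ∈ [0,1] and every j ∈ N. Then for every i ∈ N, E[ 1 / (1 + Σ_{j∈N, j≠i} 1[Q_j > λ]) ] ≤ 1/((1−λ)·|N|). (The extension, used in the proofs of Theorems 3 and 4, of Benjamini–Yekutieli's binomial expectation bound E(1/(Y+1)) < 1/(kp) for Y ~ Binomial(k−1,p) to stochastically-larger-than-uniform p-values.) -/

import Mathlib

open MeasureTheory ProbabilityTheory

-- auxiliary: expectation of product of independent bounded rvs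
lemma aux_integral_prod {Ω ι : Type*} [MeasurableSpace Ω]
    {μ : Measure Ω} [IsProbabilityMeasure μ] (X : ι → Ω → ℝ)
    (hm : ∀ j, Measurable (X j))
    (hind : iIndepFun X μ) (s : Finset ι) :
    ∫ ω, ∏ j ∈ s, X j ω ∂μ = ∏ j ∈ s, ∫ ω, X j ω ∂μ := by
  classical
  induction s using Finset.induction_on with
  | empty => simp
  | @insert a s ha ih =>
    have hInd : IndepFun (X a) (fun ω => ∏ j ∈ s, X j ω) μ := by
      have := (hind.indepFun_finset_prod_of_notMem hm ha).symm
      simpa [Finset.prod_fn] using this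
    have h := hInd.integral_fun_mul_eq_mul_integral (hm a).aestronglyMeasurable
      (Finset.measurable_prod s (fun j _ => hm j)).aestronglyMeasurable
    rw [Finset.prod_insert ha, ← ih]
    simp_rw [Finset.prod_insert ha]
    exact h

theorem expectation_inv_one_add_count_le
    {Ω : Type*} [MeasurableSpace Ω] (μ : Measure Ω) [IsProbabilityMeasure μ]
    {ι : Type*} [Fintype ι] [Nonempty ι]
    (Q : ι → Ω → ℝ) (hQm : ∀ i, Measurable (Q i))
    (hQrange : ∀ i ω, Q i ω ∈ Set.Icc (0:ℝ) 1)
    (hiid : iIndepFun Q μ)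
    (hunif : ∀ i, ∀ x ∈ Set.Icc (0:ℝ) 1, μ {ω | Q i ω ≤ x} ≤ ENNReal.ofReal x)
    (lam : ℝ) (hlam : lam ∈ Set.Ioo (0:ℝ) 1) (i : ι) :
    ∫ ω, 1 / (1 + (Nat.card {j : ι // j ≠ i ∧ lam < Q j ω} : ℝ)) ∂μ ≤
      1 / ((1 - lam) * (Fintype.card ι : ℝ)) := by
  classical
  obtain ⟨hlam0, hlam1⟩ := hlam
  set k := Fintype.card ι with hk
  have hk1 : 1 ≤ k := Fintype.card_pos
  set s : Finset ι := Finset.univ.erase i with hs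
  have hscard : s.card = k - 1 := by
    simp [hs, hk, Finset.card_erase_of_mem, Finset.card_univ]
  set c : ℝ → ℝ := fun t => max 0 (min 1 t) with hc
  have hcm : Measurable c := measurable_const.max (measurable_const.min measurable_id)
  have hc01 : ∀ t, c t ∈ Set.Icc (0:ℝ) 1 :=
    fun t => ⟨le_max_left _ _, max_le (by norm_num) (min_le_left _ _)⟩
  have hceq : ∀ t ∈ Set.Ioc (0:ℝ) 1, c t = t := by
    intro t ht
    simp [hc, min_eq_right ht.2, max_eq_right ht.1.le]
  set F : Ω → ℝ → ℝ := fun ω t => ∏ j ∈ s, (if lam < Q j ω then c t else 1) with hF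
  have hF0 : ∀ ω t, 0 ≤ F ω t := by
    intro ω t
    refine Finset.prod_nonneg fun j _ => ?_
    by_cases h : lam < Q j ω <;> simp [h, (hc01 t).1]
  have hF1 : ∀ ω t, F ω t ≤ 1 := by
    intro ω t
    refine Finset.prod_le_one (fun j _ => ?_) (fun j _ => ?_)
    · by_cases h : lam < Q j ω <;> simp [h, (hc01 t).1]
    · by_cases h : lam < Q j ω <;> simp [h, (hc01 t).2]
  have hFm : Measurable (Function.uncurry F) := by
    refine Finset.measurable_prod s fun j _ => ?_
    exact Measurable.ite (measurableSet_lt measurable_const ((hQm j).comp measurable_fst))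
      (hcm.comp measurable_snd) measurable_const
  have hνfin : IsFiniteMeasure (volume.restrict (Set.Ioc (0:ℝ) 1)) := by
    constructor
    rw [Measure.restrict_apply_univ, Real.volume_Ioc]
    exact ENNReal.ofReal_lt_top
  have hFint : Integrable (Function.uncurry F) (μ.prod (volume.restrict (Set.Ioc (0:ℝ) 1))) := by
    refine Integrable.mono' (integrable_const 1) hFm.aestronglyMeasurable
      (Filter.Eventually.of_forall fun p => ?_)
    rw [Real.norm_eq_abs, Function.uncurry_apply_pair]
    rw [abs_of_nonneg (hF0 p.1 p.2)]
    exact hF1 p.1 p.2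
  -- pointwise identity
  have hY : ∀ ω, (Nat.card {j : ι // j ≠ i ∧ lam < Q j ω}) =
      (s.filter fun j => lam < Q j ω).card := by
    intro ω
    rw [Nat.card_eq_fintype_card, Fintype.card_subtype]
    congr 1
    ext j
    simp [hs, Finset.mem_erase, and_comm]
  have hpoint : ∀ ω, 1 / (1 + (Nat.card {j : ι // j ≠ i ∧ lam < Q j ω} : ℝ)) =
      ∫ t in Set.Ioc (0:ℝ) 1, F ω t := by
    intro ω
    set m := (s.filter fun j => lam < Q j ω).card with hm
    have h1 : Set.EqOn (F ω) (fun t => t ^ m) (Set.Ioc (0:ℝ) 1) := by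
      intro t ht
      calc F ω t = ∏ j ∈ s, (if lam < Q j ω then t else 1) := by
            simp only [hF, hceq t ht]
        _ = (∏ j ∈ s.filter (fun j => lam < Q j ω), t) *
              ∏ j ∈ s.filter (fun j => ¬ lam < Q j ω), (1:ℝ) := Finset.prod_ite _ _
        _ = t ^ m := by simp [hm]
    rw [setIntegral_congr_fun measurableSet_Ioc h1]
    have h2 : ∫ t in Set.Ioc (0:ℝ) 1, t ^ m = 1 / (m + 1) := by
      rw [← intervalIntegral.integral_of_le (by norm_num : (0:ℝ) ≤ 1)]
      simp [integral_pow]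
    rw [h2, hY ω]
    push_cast
    ring
  -- probability of exceeding lam is at least 1 - lam
  have hpA : ∀ j, 1 - lam ≤ (μ {ω | lam < Q j ω}).toReal := by
    intro j
    have hBm : MeasurableSet {ω | Q j ω ≤ lam} := measurableSet_le (hQm j) measurable_const
    have h1 : μ {ω | Q j ω ≤ lam} ≤ ENNReal.ofReal lam := hunif j lam ⟨hlam0.le, hlam1.le⟩
    have h1' : (μ {ω | Q j ω ≤ lam}).toReal ≤ lam :=
      ENNReal.toReal_le_of_le_ofReal hlam0.le h1
    have hcompl : {ω | lam < Q j ω} = {ω | Q j ω ≤ lam}ᶜ := by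
      ext ω; simp [not_le]
    rw [hcompl, measure_compl hBm (measure_ne_top μ _), measure_univ,
      ENNReal.toReal_sub_of_le prob_le_one ENNReal.one_ne_top, ENNReal.toReal_one]
    linarith
  have hpA1 : ∀ j, (μ {ω | lam < Q j ω}).toReal ≤ 1 := fun j => by
    simpa using ENNReal.toReal_mono ENNReal.one_ne_top prob_le_one
  have hpA0 : ∀ j, 0 ≤ (μ {ω | lam < Q j ω}).toReal := fun j => ENNReal.toReal_nonneg
  -- for each t, the inner expectation factors and is bounded
  have hinner : ∀ t ∈ Set.Ioc (0:ℝ) 1,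
      ∫ ω, F ω t ∂μ ≤ (lam + (1 - lam) * t) ^ (k - 1) := by
    intro t ht
    set X : ι → Ω → ℝ := fun j ω => if lam < Q j ω then c t else 1 with hX
    have hXm : ∀ j, Measurable (X j) := fun j =>
      Measurable.ite (measurableSet_lt measurable_const (hQm j)) measurable_const
        measurable_const
    have hXind : iIndepFun X μ := by
      have : X = fun j => (fun x : ℝ => if lam < x then c t else 1) ∘ Q j := by
        funext j ω; simp [hX]
      rw [this]
      exact hiid.comp _ fun j =>
        Measurable.ite (measurableSet_lt measurable_const measurable_id)
          measurable_const measurable_const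
    have hfac : ∫ ω, F ω t ∂μ = ∏ j ∈ s, ∫ ω, X j ω ∂μ := by
      rw [hF]
      exact aux_integral_prod X hXm hXind s
    have hEj : ∀ j, ∫ ω, X j ω ∂μ = 1 + (c t - 1) * (μ {ω | lam < Q j ω}).toReal := by
      intro j
      have hA : MeasurableSet {ω | lam < Q j ω} :=
        measurableSet_lt measurable_const (hQm j)
      have hfun : X j = fun ω =>
          1 + Set.indicator {ω | lam < Q j ω} (fun _ => c t - 1) ω := by
        funext ω
        by_cases h : lam < Q j ω
        · simp only [hX, if_pos h, Set.indicator_of_mem (show ω ∈ {ω | lam < Q j ω} from h)]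
          ring
        · simp [hX, if_neg h, Set.indicator_of_notMem, h]
      rw [hfun, integral_add (integrable_const 1)
        ((integrable_const (c t - 1)).indicator hA), integral_const,
        integral_indicator_const _ hA]
      simp [measure_univ, mul_comm, measureReal_def]
    rw [hfac]
    have hstep : ∀ j ∈ s, ∫ ω, X j ω ∂μ ≤ lam + (1 - lam) * t := by
      intro j _
      rw [hEj j, hceq t ht]
      nlinarith [hpA j, hpA1 j, ht.1, ht.2]
    have hstep0 : ∀ j ∈ s, (0:ℝ) ≤ ∫ ω, X j ω ∂μ := by
      intro j _
      rw [hEj j, hceq t ht]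
      nlinarith [hpA1 j, hpA0 j, ht.1, ht.2]
    calc ∏ j ∈ s, ∫ ω, X j ω ∂μ ≤ ∏ _j ∈ s, (lam + (1 - lam) * t) :=
          Finset.prod_le_prod hstep0 hstep
      _ = (lam + (1 - lam) * t) ^ (k - 1) := by rw [Finset.prod_const, hscard]
  -- the final integral
  have hkpos : (0:ℝ) < (k:ℝ) := by exact_mod_cast hk1
  have hfinal : ∫ t in Set.Ioc (0:ℝ) 1, (lam + (1 - lam) * t) ^ (k - 1) =
      (1 - lam ^ k) / ((k:ℝ) * (1 - lam)) := by
    rw [← intervalIntegral.integral_of_le (by norm_num : (0:ℝ) ≤ 1)]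
    have hderiv : ∀ t ∈ Set.uIcc (0:ℝ) 1,
        HasDerivAt (fun t => (lam + (1 - lam) * t) ^ k / ((k:ℝ) * (1 - lam)))
          ((lam + (1 - lam) * t) ^ (k - 1)) t := by
      intro t _
      have h1 : HasDerivAt (fun t : ℝ => lam + (1 - lam) * t) (1 - lam) t := by
        simpa using ((hasDerivAt_id t).const_mul (1 - lam)).const_add lam
      have h3 := (h1.pow k).div_const ((k:ℝ) * (1 - lam))
      refine h3.congr_deriv ?_
      have hk0 : (k:ℝ) ≠ 0 := by positivity
      have hl0 : (1:ℝ) - lam ≠ 0 := by linarith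
      rw [div_eq_iff (mul_ne_zero hk0 hl0)]
      ring
    rw [intervalIntegral.integral_eq_sub_of_hasDerivAt hderiv
      (((continuous_const.add (continuous_const.mul continuous_id)).pow _).intervalIntegrable 0 1)]
    rw [show lam + (1 - lam) * 1 = 1 by ring, show lam + (1 - lam) * 0 = lam by ring, one_pow]
    ring
  -- put it together
  calc ∫ ω, 1 / (1 + (Nat.card {j : ι // j ≠ i ∧ lam < Q j ω} : ℝ)) ∂μ
      = ∫ ω, (∫ t in Set.Ioc (0:ℝ) 1, F ω t) ∂μ :=
        integral_congr_ae (Filter.Eventually.of_forall hpoint)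
    _ = ∫ t in Set.Ioc (0:ℝ) 1, ∫ ω, F ω t ∂μ := integral_integral_swap hFint
    _ ≤ ∫ t in Set.Ioc (0:ℝ) 1, (lam + (1 - lam) * t) ^ (k - 1) := by
        refine integral_mono_of_nonneg
          (Filter.Eventually.of_forall fun t => integral_nonneg fun ω => hF0 ω t)
          (((continuous_const.add (continuous_const.mul continuous_id)).pow _).integrableOn_Ioc) ?_
        exact (ae_restrict_mem measurableSet_Ioc).mono fun t ht => hinner t ht
    _ = (1 - lam ^ k) / ((k:ℝ) * (1 - lam)) := hfinal
    _ ≤ 1 / ((1 - lam) * (k:ℝ)) := by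
        rw [mul_comm (1 - lam) (k:ℝ)]
        have hd : (0:ℝ) < (k:ℝ) * (1 - lam) := by nlinarith
        have hnum : 1 - lam ^ k ≤ 1 := by nlinarith [pow_nonneg hlam0.le k]
        exact div_le_div_of_nonneg_right hnum hd.le
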